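/- arXiv:1806.07308 — 4 statements merged into one kernel-verified Lean document; each statement's English description precedes it below -/
import Mathlib

section
/- Let Y_1, ..., Y_K : ℝ → ℝ be strictly concave functions, with ŷ_k the unique maximizer of Y_k, and suppose ŷ_1 ≥ ŷ_2 ≥ ... ≥ ŷ_K with ŷ_1 > ŷ_K. Then any maximizer (ȳ_1,...,ȳ_K) of ∑_k Y_k(y_k) subject to y_1 ≤ y_2 ≤ ... ≤ y_K satisfies ȳ_1 = ȳ_2 = ... = ȳ_K. -/
/-- Strict increase to the left of the peak of a strictly concave function. -/
lemma aux_incr (Y : ℝ → ℝ) (h : StrictConcaveOn ℝ Set.univ Y) (m : ℝ)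
    (hm : ∀ y : ℝ, y ≠ m → Y y < Y m) {x x' : ℝ} (hxx : x < x') (hx' : x' ≤ m) :
    Y x < Y x' := by
  rcases eq_or_lt_of_le hx' with rfl | hlt
  · exact hm x hxx.ne
  · have hxm : x < m := hxx.trans hlt
    set a : ℝ := (m - x') / (m - x) with ha_def
    set b : ℝ := (x' - x) / (m - x) with hb_def
    have hd : (0:ℝ) < m - x := by linarith
    have ha : 0 < a := div_pos (by linarith) hd
    have hb : 0 < b := div_pos (by linarith) hd
    have hab : a + b = 1 := by
      rw [← add_div, div_eq_one_iff_eq hd.ne']; ring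
    have hcomb : a • x + b • m = x' := by
      rw [ha_def, hb_def, smul_eq_mul, smul_eq_mul, div_mul_eq_mul_div, div_mul_eq_mul_div, ← add_div, div_eq_iff hd.ne']; ring
    have hYx : Y x < Y m := hm x hxm.ne
    have := h.2 (Set.mem_univ x) (Set.mem_univ m) hxm.ne ha hb hab
    rw [hcomb] at this
    have : a • Y x + b • Y x < Y x' := by
      refine lt_trans ?_ this
      simp only [smul_eq_mul]
      nlinarith
    calc Y x = a • Y x + b • Y x := by rw [← add_smul, hab, one_smul]
    _ < Y x' := this

/-- Strict decrease to the right of the peak of a strictly concave function. -/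
lemma aux_decr (Y : ℝ → ℝ) (h : StrictConcaveOn ℝ Set.univ Y) (m : ℝ)
    (hm : ∀ y : ℝ, y ≠ m → Y y < Y m) {x x' : ℝ} (hxx : x < x') (hx : m ≤ x) :
    Y x' < Y x := by
  rcases eq_or_lt_of_le hx with rfl | hlt
  · exact hm x' hxx.ne'
  · have hxm : m < x' := hlt.trans hxx
    set a : ℝ := (x' - x) / (x' - m) with ha_def
    set b : ℝ := (x - m) / (x' - m) with hb_def
    have hd : (0:ℝ) < x' - m := by linarith
    have ha : 0 < a := div_pos (by linarith) hd
    have hb : 0 < b := div_pos (by linarith) hd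
    have hab : a + b = 1 := by
      rw [← add_div, div_eq_one_iff_eq hd.ne']; ring
    have hcomb : a • m + b • x' = x := by
      rw [ha_def, hb_def, smul_eq_mul, smul_eq_mul, div_mul_eq_mul_div, div_mul_eq_mul_div, ← add_div, div_eq_iff hd.ne']; ring
    have hYx' : Y x' < Y m := hm x' hxm.ne'
    have := h.2 (Set.mem_univ m) (Set.mem_univ x') hxm.ne ha hb hab
    rw [hcomb] at this
    calc Y x' = a • Y x' + b • Y x' := by rw [← add_smul, hab, one_smul]
    _ < a • Y m + b • Y x' := by
        simp only [smul_eq_mul]; nlinarith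
    _ < Y x := this

/-- A concave function on ℝ with a local max at 0 has a global max at 0. -/
lemma aux_glob (φ : ℝ → ℝ) (hφ : ConcaveOn ℝ Set.univ φ) (δ : ℝ) (hδ : 0 < δ)
    (hloc : ∀ ε : ℝ, |ε| ≤ δ → φ ε ≤ φ 0) : ∀ ε : ℝ, φ ε ≤ φ 0 := by
  intro ε
  by_cases hε : |ε| ≤ δ
  · exact hloc ε hε
  · push_neg at hε
    have hε0 : 0 < |ε| := lt_trans hδ hε
    set t : ℝ := δ / |ε| with ht_def
    have ht0 : 0 < t := div_pos hδ hε0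
    have ht1 : t < 1 := (div_lt_one hε0).2 hε
    have habs : |t * ε| = δ := by
      rw [abs_mul, abs_of_pos ht0, ht_def, div_mul_cancel₀ _ hε0.ne']
    have h1 : φ (t * ε) ≤ φ 0 := hloc _ (le_of_eq habs)
    have h2 := hφ.2 (Set.mem_univ ε) (Set.mem_univ 0) (le_of_lt ht0)
      (by linarith : (0:ℝ) ≤ 1 - t) (by ring)
    simp only [smul_eq_mul, mul_zero, add_zero] at h2
    nlinarith

/-- Shifting a block of an optimal monotone vector: the block sum is globally
maximized at shift 0, provided small shifts preserve monotonicity. -/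
lemma aux_block (K : ℕ) (Y : Fin K → ℝ → ℝ)
    (hconc : ∀ k, StrictConcaveOn ℝ Set.univ (Y k))
    (ybar : Fin K → ℝ)
    (hopt : ∀ z : Fin K → ℝ, Monotone z →
      ∑ k, Y k (z k) ≤ ∑ k, Y k (ybar k))
    (p : Fin K → Prop) [DecidablePred p] (δ : ℝ) (hδ : 0 < δ)
    (hfeas : ∀ ε : ℝ, |ε| ≤ δ →
      Monotone (fun k => if p k then ybar k + ε else ybar k)) :
    ∀ ε : ℝ, ∑ k ∈ Finset.univ.filter p, Y k (ybar k + ε)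
      ≤ ∑ k ∈ Finset.univ.filter p, Y k (ybar k) := by
  set S := Finset.univ.filter p with hS
  set φ : ℝ → ℝ := fun ε => ∑ k ∈ S, Y k (ybar k + ε) with hφ_def
  have hφconc : ConcaveOn ℝ Set.univ φ := by
    refine ⟨convex_univ, fun x _ y _ a b ha hb hab => ?_⟩
    simp only [hφ_def, Finset.smul_sum, ← Finset.sum_add_distrib]
    refine Finset.sum_le_sum fun k _ => ?_
    have := (hconc k).concaveOn.2 (Set.mem_univ (ybar k + x)) (Set.mem_univ (ybar k + y))
      ha hb hab
    have heq : a • (ybar k + x) + b • (ybar k + y) = ybar k + (a • x + b • y) := by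
      simp only [smul_eq_mul]; linear_combination (ybar k) * hab
    rw [heq] at this
    exact this
  have hloc : ∀ ε : ℝ, |ε| ≤ δ → φ ε ≤ φ 0 := by
    intro ε hε
    set z : Fin K → ℝ := fun k => if p k then ybar k + ε else ybar k with hz_def
    have hle := hopt z (hfeas ε hε)
    have e1 : ∑ k, Y k (z k)
        = ∑ k ∈ Finset.univ.filter p, Y k (ybar k + ε)
          + ∑ k ∈ Finset.univ.filter (fun k => ¬ p k), Y k (ybar k) := by
      rw [← Finset.sum_filter_add_sum_filter_not Finset.univ p (fun k => Y k (z k))]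
      congr 1
      · refine Finset.sum_congr rfl fun k hk => ?_
        simp only [Finset.mem_filter] at hk
        simp [hz_def, hk.2]
      · refine Finset.sum_congr rfl fun k hk => ?_
        simp only [Finset.mem_filter] at hk
        simp [hz_def, hk.2]
    have e2 : ∑ k, Y k (ybar k)
        = ∑ k ∈ Finset.univ.filter p, Y k (ybar k)
          + ∑ k ∈ Finset.univ.filter (fun k => ¬ p k), Y k (ybar k) :=
      (Finset.sum_filter_add_sum_filter_not Finset.univ p _).symm
    rw [e1, e2] at hle
    simp only [hφ_def, hS, add_zero]
    linarith
  have := aux_glob φ hφconc δ hδ hloc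
  intro ε
  have h := this ε
  simpa [hφ_def, add_zero] using h

theorem stmt_8 (K : ℕ) (hK : 1 ≤ K) (Y : Fin K → ℝ → ℝ)
    (hconc : ∀ k, StrictConcaveOn ℝ Set.univ (Y k))
    (yhat : Fin K → ℝ)
    (hmax : ∀ k, ∀ y : ℝ, y ≠ yhat k → Y k y < Y k (yhat k))
    (horder : ∀ k l : Fin K, k ≤ l → yhat l ≤ yhat k)
    (hstrict : yhat ⟨K - 1, by omega⟩ < yhat ⟨0, by omega⟩)
    (ybar : Fin K → ℝ) (hybar : Monotone ybar)
    (hopt : ∀ z : Fin K → ℝ, Monotone z →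
      ∑ k, Y k (z k) ≤ ∑ k, Y k (ybar k)) :
    ∀ k l : Fin K, ybar k = ybar l := by
  suffices H : ∀ p : ℕ, ∀ hp : p + 1 < K,
      ybar ⟨p, by omega⟩ = ybar ⟨p + 1, hp⟩ by
    have base : ∀ i : ℕ, ∀ hi : i < K, ybar ⟨i, hi⟩ = ybar ⟨0, by omega⟩ := by
      intro i
      induction i with
      | zero => intro hi; rfl
      | succ n ih => intro hi; rw [← H n hi]; exact ih (by omega)
    intro k l
    exact (base k.1 k.2).trans (base l.1 l.2).symm
  intro p hp
  set P : Fin K := ⟨p, by omega⟩ with hP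
  set Q : Fin K := ⟨p + 1, hp⟩ with hQ
  have hPQ : P ≤ Q := by simp [hP, hQ, Fin.le_def]
  by_contra hne
  have hlt : ybar P < ybar Q := lt_of_le_of_ne (hybar hPQ) hne
  set δ : ℝ := ybar Q - ybar P with hδ_def
  have hδ : 0 < δ := by simp [hδ_def]; linarith
  -- Head block: indices ≤ p
  have headfeas : ∀ ε : ℝ, |ε| ≤ δ →
      Monotone (fun k : Fin K => if k.1 ≤ p then ybar k + ε else ybar k) := by
    intro ε hε
    have hε1 : ε ≤ δ := le_trans (le_abs_self ε) hε
    intro k l hkl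
    have hkl' : k.1 ≤ l.1 := hkl
    by_cases hk : k.1 ≤ p <;> by_cases hl : l.1 ≤ p <;> simp [hk, hl]
    · linarith [hybar hkl]
    · have h1 : ybar k ≤ ybar P := hybar (show k ≤ P from hk)
      have h2 : ybar Q ≤ ybar l := hybar (show Q ≤ l from by
        simp [hQ, Fin.le_def]; omega)
      simp [hδ_def] at hε1 ⊢
      linarith
    · omega
    · exact hybar hkl
  have headle := aux_block K Y hconc ybar hopt (fun k => k.1 ≤ p) δ hδ headfeas
  have hPge : yhat P ≤ ybar P := by
    by_contra h
    push_neg at h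
    set ε0 : ℝ := yhat P - ybar P with hε0_def
    have hε0 : 0 < ε0 := by simp [hε0_def]; linarith
    have hne : (Finset.univ.filter (fun k : Fin K => k.1 ≤ p)).Nonempty :=
      ⟨P, by simp [hP]⟩
    have hstrictsum : ∑ k ∈ Finset.univ.filter (fun k : Fin K => k.1 ≤ p), Y k (ybar k)
        < ∑ k ∈ Finset.univ.filter (fun k : Fin K => k.1 ≤ p), Y k (ybar k + ε0) := by
      refine Finset.sum_lt_sum_of_nonempty hne fun k hk => ?_
      simp only [Finset.mem_filter] at hk
      have hkP : k ≤ P := hk.2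
      have h1 : ybar k ≤ ybar P := hybar hkP
      have h2 : yhat P ≤ yhat k := horder k P hkP
      exact aux_incr (Y k) (hconc k) (yhat k) (hmax k)
        (by linarith) (by simp [hε0_def]; linarith)
    linarith [headle ε0]
  -- Tail block: indices > p
  have tailfeas : ∀ ε : ℝ, |ε| ≤ δ →
      Monotone (fun k : Fin K => if ¬ k.1 ≤ p then ybar k + ε else ybar k) := by
    intro ε hε
    have hε1 : -δ ≤ ε := neg_le_of_neg_le (le_trans (neg_le_abs ε) hε)
    intro k l hkl
    have hkl' : k.1 ≤ l.1 := hkl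
    by_cases hk : k.1 ≤ p <;> by_cases hl : l.1 ≤ p <;> simp [hk, hl]
    · exact hybar hkl
    · have h1 : ybar k ≤ ybar P := hybar (show k ≤ P from hk)
      have h2 : ybar Q ≤ ybar l := hybar (show Q ≤ l from by
        simp [hQ, Fin.le_def]; omega)
      simp [hδ_def] at hε1 ⊢
      linarith
    · omega
    · linarith [hybar hkl]
  have taille := aux_block K Y hconc ybar hopt (fun k => ¬ k.1 ≤ p) δ hδ tailfeas
  have hQle : ybar Q ≤ yhat Q := by
    by_contra h
    push_neg at h
    set ε1 : ℝ := yhat Q - ybar Q with hε1_def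
    have hε1 : ε1 < 0 := by simp [hε1_def]; linarith
    have hne : (Finset.univ.filter (fun k : Fin K => ¬ k.1 ≤ p)).Nonempty :=
      ⟨Q, by simp [hQ]⟩
    have hstrictsum : ∑ k ∈ Finset.univ.filter (fun k : Fin K => ¬ k.1 ≤ p), Y k (ybar k)
        < ∑ k ∈ Finset.univ.filter (fun k : Fin K => ¬ k.1 ≤ p), Y k (ybar k + ε1) := by
      refine Finset.sum_lt_sum_of_nonempty hne fun k hk => ?_
      simp only [Finset.mem_filter] at hk
      have hQk : Q ≤ k := by simp [hQ, Fin.le_def]; omega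
      have h1 : ybar Q ≤ ybar k := hybar hQk
      have h2 : yhat k ≤ yhat Q := horder Q k hQk
      exact aux_decr (Y k) (hconc k) (yhat k) (hmax k)
        (by linarith) (by simp [hε1_def]; linarith)
    linarith [taille ε1]
  have : yhat Q ≤ yhat P := horder P Q hPQ
  linarith
end

section
/- Let Q_1, Q_2 : ℝ → ℝ be unimodal functions (each strictly increasing up to its unique maximizer and strictly decreasing after), with maximizers σ̂_1 > σ̂_2. Then any maximizer (σ̄_1, σ̄_2) of Q_1(σ_1) + Q_2(σ_2) subject to σ_1 ≤ σ_2 satisfies σ̄_1 = σ̄_2. -/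
theorem stmt_9 (Q₁ Q₂ : ℝ → ℝ) (σh₁ σh₂ : ℝ)
    (h₁inc : StrictMonoOn Q₁ (Set.Iic σh₁)) (h₁dec : StrictAntiOn Q₁ (Set.Ici σh₁))
    (h₂inc : StrictMonoOn Q₂ (Set.Iic σh₂)) (h₂dec : StrictAntiOn Q₂ (Set.Ici σh₂))
    (hσ : σh₂ < σh₁)
    (σb₁ σb₂ : ℝ) (hle : σb₁ ≤ σb₂)
    (hopt : ∀ σ₁ σ₂ : ℝ, σ₁ ≤ σ₂ → Q₁ σ₁ + Q₂ σ₂ ≤ Q₁ σb₁ + Q₂ σb₂) :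
    σb₁ = σb₂ := by
  by_contra hne
  have hlt : σb₁ < σb₂ := lt_of_le_of_ne hle hne
  rcases lt_or_ge σb₁ σh₁ with h | h
  · set t := min σh₁ σb₂ with ht
    have htlt : σb₁ < t := lt_min h hlt
    have h1 : Q₁ σb₁ < Q₁ t :=
      h₁inc (le_of_lt h) (Set.mem_Iic.mpr (min_le_left _ _)) htlt
    have := hopt t σb₂ (min_le_right _ _)
    linarith
  · have h2 : Q₂ σb₂ < Q₂ σb₁ :=
      h₂dec (le_of_lt (lt_of_lt_of_le hσ h))
        (le_of_lt (lt_of_lt_of_le hσ (le_trans h hle))) hlt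
    have := hopt σb₁ σb₁ le_rfl
    linarith
end

section
/- Let V : ℝ × ℝ → ℝ satisfy strictly increasing differences in (σ,t), and let types σ_1 < σ_2 < ... < σ_I with periods 0 ≤ t_1 ≤ t_2 ≤ ... ≤ t_I. Define prices by π_I = V(σ_I, t_I) and π_i = π_{i+1} + V(σ_i, t_i) - V(σ_i, t_{i+1}) for i < I. Then these prices satisfy π_i ≥ π_{i+1} + V(σ_{i+1}, t_i) - V(σ_{i+1}, t_{i+1}) for all i < I. -/
theorem stmt_14 (V : ℝ → ℝ → ℝ)
    (hID : ∀ s s' u u' : ℝ, s' < s → u' < u →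
      V s' u - V s' u' < V s u - V s u')
    (I : ℕ) (hI : 1 ≤ I) (σ t π : ℕ → ℝ)
    (hσ : ∀ i j, 1 ≤ i → i < j → j ≤ I → σ i < σ j)
    (ht0 : 0 ≤ t 1)
    (ht : ∀ i j, 1 ≤ i → i ≤ j → j ≤ I → t i ≤ t j)
    (hπI : π I = V (σ I) (t I))
    (hπ : ∀ i, 1 ≤ i → i < I → π i = π (i + 1) + V (σ i) (t i) - V (σ i) (t (i + 1))) :
    ∀ i, 1 ≤ i → i < I →
      π i ≥ π (i + 1) + V (σ (i + 1)) (t i) - V (σ (i + 1)) (t (i + 1)) := by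
  intro i h1 hiI
  rw [hπ i h1 hiI]
  have hs : σ i < σ (i + 1) := hσ i (i + 1) h1 (Nat.lt_succ_self i) hiI
  have htle : t i ≤ t (i + 1) := ht i (i + 1) h1 (Nat.le_succ i) hiI
  rcases eq_or_lt_of_le htle with h | h
  · rw [h]; simp
  · have := hID (σ (i + 1)) (σ i) (t (i + 1)) (t i) hs h
    linarith
end

section
/- Define the unit-period valuation V(σ,t) = α(μ - (1/√t) ∫_{√t Δq/σ}^∞ (σx - √t Δq) φ(x) dx) for σ > 0, t > 0, where φ is the standard normal density and Δq, α > 0 are constants. Then ∂V/∂t (σ,t) = (ασ/(2 t^{3/2})) ∫_{√t Δq/σ}^∞ x φ(x) dx > 0. -/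
open MeasureTheory Real

noncomputable def phi (x : ℝ) : ℝ := Real.exp (-x ^ 2 / 2) / Real.sqrt (2 * Real.pi)


lemma phi_pos (x : ℝ) : 0 < phi x := by
  unfold phi
  positivity

lemma continuous_phi : Continuous phi := by
  unfold phi; fun_prop

lemma hasDerivAt_phi (x : ℝ) : HasDerivAt phi (-x * phi x) x := by
  have h1 : HasDerivAt (fun y : ℝ => -y ^ 2 / 2) (-x) x := by
    have := ((hasDerivAt_pow 2 x).neg).div_const 2
    exact this.congr_deriv (by ring)
  have h2 := (h1.exp).div_const (Real.sqrt (2 * Real.pi))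
  exact h2.congr_deriv (by unfold phi; ring)

lemma integrable_phi : Integrable phi := by
  have h := (integrable_exp_neg_mul_sq (by norm_num : (0:ℝ) < 1/2)).div_const
    (Real.sqrt (2 * Real.pi))
  convert h using 2 with x
  unfold phi; congr 2; ring

lemma integrable_mul_phi : Integrable (fun x => x * phi x) := by
  have h := (integrable_mul_exp_neg_mul_sq (by norm_num : (0:ℝ) < 1/2)).div_const
    (Real.sqrt (2 * Real.pi))
  convert h using 2 with x
  unfold phi; rw [mul_div_assoc]; congr 2; ring

lemma tendsto_phi_atTop : Filter.Tendsto phi Filter.atTop (nhds 0) := by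
  have h1 : Filter.Tendsto (fun x : ℝ => -x ^ 2 / 2) Filter.atTop Filter.atBot := by
    apply Filter.Tendsto.atBot_div_const (by norm_num)
    exact Filter.tendsto_neg_atBot_iff.mpr (Filter.tendsto_pow_atTop (by norm_num))
  have h2 := Real.tendsto_exp_atBot.comp h1
  have h3 := h2.div_const (Real.sqrt (2 * Real.pi))
  rw [zero_div] at h3
  exact h3

lemma integral_Ioi_mul_phi (a : ℝ) : ∫ x in Set.Ioi a, x * phi x = phi a := by
  have h := integral_Ioi_of_hasDerivAt_of_tendsto
    (f := fun y => -phi y) (f' := fun y => y * phi y) (a := a) (m := 0)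
    (continuous_phi.neg.continuousWithinAt)
    (fun x _ => ((hasDerivAt_phi x).neg).congr_deriv (by ring))
    (integrable_mul_phi.integrableOn)
    (by simpa using tendsto_phi_atTop.neg)
  simpa using h

noncomputable def Phibar (a : ℝ) : ℝ := ∫ x in Set.Ioi a, phi x

lemma hasDerivAt_Phibar (a : ℝ) : HasDerivAt Phibar (-phi a) a := by
  have hfun : Phibar = fun u =>
      ((∫ x, phi x) - ∫ x in Set.Iic a, phi x) - ∫ x in a..u, phi x := by
    funext u
    have h1 : (∫ x in Set.Iic u, phi x) + ∫ x in Set.Ioi u, phi x = ∫ x, phi x := by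
      have := integral_add_compl (measurableSet_Iic (a := u)) integrable_phi
      simpa [Set.compl_Iic] using this
    have h2 : (∫ x in Set.Iic u, phi x) - ∫ x in Set.Iic a, phi x = ∫ x in a..u, phi x :=
      intervalIntegral.integral_Iic_sub_Iic integrable_phi.integrableOn
        integrable_phi.integrableOn
    unfold Phibar; linarith
  rw [hfun]
  have h3 : HasDerivAt (fun u => ∫ x in a..u, phi x) (phi a) a :=
    intervalIntegral.integral_hasDerivAt_right
      (integrable_phi.intervalIntegrable)
      (continuous_phi.stronglyMeasurableAtFilter _ _)
      continuous_phi.continuousAt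
  exact ((hasDerivAt_const a _).sub h3).congr_deriv (by ring)

noncomputable def Val (α μ Δq σ t : ℝ) : ℝ :=
  α * (μ - (1 / Real.sqrt t) *
    ∫ x in Set.Ioi (Real.sqrt t * Δq / σ), (σ * x - Real.sqrt t * Δq) * phi x)


lemma val_eq (α μ Δq σ : ℝ) {u : ℝ} (hu : 0 < u) :
    Val α μ Δq σ u = α * (μ - σ * phi (Real.sqrt u * Δq / σ) / Real.sqrt u
      + Δq * Phibar (Real.sqrt u * Δq / σ)) := by
  have hsu : Real.sqrt u ≠ 0 := (Real.sqrt_pos.mpr hu).ne'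
  have hsplit : ∫ x in Set.Ioi (Real.sqrt u * Δq / σ), (σ * x - Real.sqrt u * Δq) * phi x
      = σ * phi (Real.sqrt u * Δq / σ)
        - Real.sqrt u * Δq * Phibar (Real.sqrt u * Δq / σ) := by
    have h1 : ∀ x : ℝ, (σ * x - Real.sqrt u * Δq) * phi x
        = σ * (x * phi x) - Real.sqrt u * Δq * phi x := fun x => by ring
    simp only [h1]
    rw [integral_sub ((integrable_mul_phi.integrableOn).const_mul σ)
      ((integrable_phi.integrableOn).const_mul (Real.sqrt u * Δq)),
      integral_const_mul, integral_const_mul, integral_Ioi_mul_phi]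
    rfl
  rw [Val, hsplit]
  have h2 : (1 / Real.sqrt u) * (σ * phi (Real.sqrt u * Δq / σ)
      - Real.sqrt u * Δq * Phibar (Real.sqrt u * Δq / σ))
      = σ * phi (Real.sqrt u * Δq / σ) / Real.sqrt u
        - Δq * Phibar (Real.sqrt u * Δq / σ) := by
    field_simp
  rw [h2]
  ring

lemma main_deriv (α μ Δq σ t : ℝ) (hσ : 0 < σ) (ht : 0 < t) :
    HasDerivAt (fun u => Val α μ Δq σ u)
      (α * σ / (2 * t ^ ((3 : ℝ) / 2)) * phi (Real.sqrt t * Δq / σ)) t := by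
  set s := Real.sqrt t with hs_def
  have hs0 : 0 < s := Real.sqrt_pos.mpr ht
  have hs2 : s ^ 2 = t := Real.sq_sqrt ht.le
  have h32 : t ^ ((3 : ℝ) / 2) = s ^ 3 := by
    rw [show ((3:ℝ)/2) = ((1:ℝ)/2) * ((3:ℕ):ℝ) by norm_num, Real.rpow_mul ht.le,
      Real.rpow_natCast, ← Real.sqrt_eq_rpow]
  have hsd : HasDerivAt Real.sqrt (1 / (2 * s)) t := Real.hasDerivAt_sqrt ht.ne'
  have hc : HasDerivAt (fun u => Real.sqrt u * Δq / σ) (1 / (2 * s) * Δq / σ) t :=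
    (hsd.mul_const Δq).div_const σ
  have hphic : HasDerivAt (fun u => phi (Real.sqrt u * Δq / σ))
      (-(s * Δq / σ) * phi (s * Δq / σ) * (1 / (2 * s) * Δq / σ)) t :=
    by have := HasDerivAt.comp t (hasDerivAt_phi (Real.sqrt t * Δq / σ)) hc; exact this
  have hPhic : HasDerivAt (fun u => Phibar (Real.sqrt u * Δq / σ))
      (-phi (s * Δq / σ) * (1 / (2 * s) * Δq / σ)) t :=
    by have := HasDerivAt.comp t (hasDerivAt_Phibar (Real.sqrt t * Δq / σ)) hc; exact this
  have hquot : HasDerivAt (fun u => σ * phi (Real.sqrt u * Δq / σ) / Real.sqrt u)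
      ((σ * (-(s * Δq / σ) * phi (s * Δq / σ) * (1 / (2 * s) * Δq / σ)) * s
        - σ * phi (s * Δq / σ) * (1 / (2 * s))) / s ^ 2) t :=
    (hphic.const_mul σ).div hsd hs0.ne'
  have hF : HasDerivAt (fun u => α * (μ - σ * phi (Real.sqrt u * Δq / σ) / Real.sqrt u
      + Δq * Phibar (Real.sqrt u * Δq / σ)))
      (α * ((0 - (σ * (-(s * Δq / σ) * phi (s * Δq / σ) * (1 / (2 * s) * Δq / σ)) * s
        - σ * phi (s * Δq / σ) * (1 / (2 * s))) / s ^ 2)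
        + Δq * (-phi (s * Δq / σ) * (1 / (2 * s) * Δq / σ)))) t :=
    (((hasDerivAt_const t μ).sub hquot).add (hPhic.const_mul Δq)).const_mul α
  have hev : (fun u => Val α μ Δq σ u) =ᶠ[nhds t]
      (fun u => α * (μ - σ * phi (Real.sqrt u * Δq / σ) / Real.sqrt u
        + Δq * Phibar (Real.sqrt u * Δq / σ))) :=
    (eventually_gt_nhds ht).mono fun u hu => val_eq α μ Δq σ hu
  have := hF.congr_of_eventuallyEq hev
  refine this.congr_deriv ?_
  rw [h32]
  field_simp
  ring


theorem stmt_16 (α μ Δq σ t : ℝ) (hα : 0 < α) (hΔq : 0 < Δq)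
    (hσ : 0 < σ) (ht : 0 < t) :
    HasDerivAt (fun u => Val α μ Δq σ u)
      (α * σ / (2 * t ^ ((3 : ℝ) / 2)) *
        ∫ x in Set.Ioi (Real.sqrt t * Δq / σ), x * phi x) t ∧
    0 < α * σ / (2 * t ^ ((3 : ℝ) / 2)) *
        ∫ x in Set.Ioi (Real.sqrt t * Δq / σ), x * phi x := by
  have hI : ∫ x in Set.Ioi (Real.sqrt t * Δq / σ), x * phi x
      = phi (Real.sqrt t * Δq / σ) := integral_Ioi_mul_phi _
  constructor
  · rw [hI]; exact main_deriv α μ Δq σ t hσ ht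
  · rw [hI]
    have h32 : 0 < t ^ ((3 : ℝ) / 2) := Real.rpow_pos_of_pos ht _
    exact mul_pos (div_pos (mul_pos hα hσ) (by positivity)) (phi_pos _)
end
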